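/- Let G be an acyclic digraph on a finite vertex set V, and let (a,b) and (c,d) be edges of the complement of tcl(G) that indirectly force each other in the complement of tcl(G), i.e., (a,b) Γ* (c,d) with respect to the complement of tcl(G). Then (a,b) and (c,d) indirectly force each other in the complement of G, i.e., (a,b) Γ* (c,d) with respect to the complement of G. -/

import Mathlib

/-- Undirected closure of a digraph: `E ∪ E⁻¹`. -/
def ucl {V : Type*} (E : V → V → Prop) : V → V → Prop := fun a b => E a b ∨ E b a

/-- Complement of a digraph: all pairs of distinct vertices not in `ucl E`. -/
def cmpl {V : Type*} (E : V → V → Prop) : V → V → Prop := fun a b => a ≠ b ∧ ¬ ucl E a b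

/-- A digraph is oriented iff `E ∩ E⁻¹ = ∅`. -/
def Oriented {V : Type*} (E : V → V → Prop) : Prop := ∀ a b, E a b → ¬ E b a

/-- `O` is an orientation of `E`: a maximal oriented subset of `E`. -/
def IsOrientation {V : Type*} (O E : V → V → Prop) : Prop :=
  (∀ a b, O a b → E a b) ∧ Oriented O ∧
    ∀ O' : V → V → Prop, (∀ a b, O' a b → E a b) → Oriented O' →
      (∀ a b, O a b → O' a b) → ∀ a b, O' a b → O a b

/-- Transitivity of a digraph: `(a,b) ∈ E`, `(b,c) ∈ E` and `a ≠ c` imply `(a,c) ∈ E`. -/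
def TransD {V : Type*} (E : V → V → Prop) : Prop :=
  ∀ a b c, E a b → E b c → a ≠ c → E a c

/-- Transitive closure of a digraph. -/
def tcl {V : Type*} (E : V → V → Prop) : V → V → Prop := Relation.TransGen E

/-- A digraph is acyclic iff its transitive closure is irreflexive. -/
def Acyclic {V : Type*} (E : V → V → Prop) : Prop := Irreflexive (tcl E)

/-- A transitive orientation of `E` is an orientation of `E` that is transitive. -/
def IsTransOrientation {V : Type*} (O E : V → V → Prop) : Prop :=
  IsOrientation O E ∧ TransD O

/-- `E` is transitively orientable iff it has a transitive orientation. -/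
def TransOrientable {V : Type*} (E : V → V → Prop) : Prop := ∃ O, IsTransOrientation O E

/-- `L` is a strict linear order on the vertex set. -/
def IsStrictLinear {V : Type*} (L : V → V → Prop) : Prop :=
  Irreflexive L ∧ Transitive L ∧ ∀ a b : V, a ≠ b → L a b ∨ L b a

/-- `E` is 2-dimensional: the intersection of two strict linear orders. -/
def TwoDim {V : Type*} (E : V → V → Prop) : Prop :=
  ∃ L₁ L₂ : V → V → Prop, IsStrictLinear L₁ ∧ IsStrictLinear L₂ ∧
    ∀ a b, E a b ↔ L₁ a b ∧ L₂ a b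

/-- Direct forcing `Γ` between edges of an undirected graph `E`:
`(a,b) Γ (c,d)` iff both are edges of `E` and either `a = c` with `b, d` non-adjacent,
or `b = d` with `a, c` non-adjacent. -/
def Forces {V : Type*} (E : V → V → Prop) (e f : V × V) : Prop :=
  E e.1 e.2 ∧ E f.1 f.2 ∧
    ((e.1 = f.1 ∧ e.2 ≠ f.2 ∧ ¬ E e.2 f.2) ∨ (e.2 = f.2 ∧ e.1 ≠ f.1 ∧ ¬ E e.1 f.1))

/-- `S` is a 2-dimensional subgraph of `G`: a subgraph that is a 2-dimensional
acyclic transitive digraph. -/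
def TwoDimSubgraph {V : Type*} (G S : V → V → Prop) : Prop :=
  (∀ a b, S a b → G a b) ∧ Irreflexive S ∧ TransD S ∧ Acyclic S ∧ TwoDim S

/-- A permutation graph: an undirected graph such that both it and its complement
are transitively orientable. -/
def PermGraph {V : Type*} (E : V → V → Prop) : Prop :=
  Irreflexive E ∧ (∀ a b, E a b → E b a) ∧ TransOrientable E ∧ TransOrientable (cmpl E)

/-- `S` is a permutation subgraph of `G`: an undirected subgraph of `G` that is a
permutation graph. -/
def PermSubgraph {V : Type*} (G S : V → V → Prop) : Prop :=
  (∀ a b, S a b → G a b) ∧ PermGraph S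

section Aux

variable {V : Type*} {G : V → V → Prop}

lemma cmpl_symm' {E : V → V → Prop} {a b : V} (h : cmpl E a b) : cmpl E b a :=
  ⟨h.1.symm, fun hu => h.2 hu.symm⟩

lemma cmpl_tcl_sub {a b : V} (h : cmpl (tcl G) a b) : cmpl G a b :=
  ⟨h.1, fun hu => h.2 (hu.imp Relation.TransGen.single Relation.TransGen.single)⟩

lemma not_cmpl_of_rel {a b : V} (h : G a b) : ¬ cmpl G a b :=
  fun hc => hc.2 (Or.inl h)

lemma forces_symm {E : V → V → Prop} (hE : ∀ a b, E a b → E b a)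
    {e f : V × V} (h : Forces E e f) : Forces E f e := by
  obtain ⟨h1, h2, h3 | h3⟩ := h
  · exact ⟨h2, h1, Or.inl ⟨h3.1.symm, h3.2.1.symm, fun hx => h3.2.2 (hE _ _ hx)⟩⟩
  · exact ⟨h2, h1, Or.inr ⟨h3.1.symm, h3.2.1.symm, fun hx => h3.2.2 (hE _ _ hx)⟩⟩

lemma cmpl_rel_symm : ∀ a b : V, cmpl G a b → cmpl G b a := fun _ _ => cmpl_symm'

lemma transGen_symm {r : V × V → V × V → Prop} (hr : ∀ e f, r e f → r f e)
    {e f : V × V} (h : Relation.TransGen r e f) : Relation.TransGen r f e := by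
  induction h with
  | single h => exact Relation.TransGen.single (hr _ _ h)
  | tail _ h ih => exact (Relation.TransGen.single (hr _ _ h)).trans ih

lemma chain_fst (hirr : Irreflexive G) (hacyc : Acyclic G) (a : V) :
    ∀ {b d : V}, Relation.TransGen G b d → cmpl (tcl G) a b → cmpl (tcl G) a d →
      Relation.TransGen (Forces (cmpl G)) (a, b) (a, d) := by
  intro b d htcl
  induction htcl using Relation.TransGen.head_induction_on with
  | single h =>
    intro hab had
    refine Relation.TransGen.single ⟨cmpl_tcl_sub hab, cmpl_tcl_sub had, Or.inl ⟨rfl, ?_, ?_⟩⟩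
    · rintro rfl; exact hirr _ h
    · exact not_cmpl_of_rel h
  | head h htail ih =>
    rename_i b x
    intro hab had
    have hax : cmpl (tcl G) a x := by
      refine ⟨?_, ?_⟩
      · rintro rfl; exact hab.2 (Or.inr (Relation.TransGen.single h))
      · rintro (hx | hx)
        · exact had.2 (Or.inl (hx.trans htail))
        · exact hab.2 (Or.inr (Relation.TransGen.head h hx))
    refine Relation.TransGen.head (b := (a, x)) ⟨cmpl_tcl_sub hab, cmpl_tcl_sub hax, Or.inl ⟨rfl, ?_, ?_⟩⟩ (ih hax had)
    · rintro rfl; exact hirr _ h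
    · exact not_cmpl_of_rel h

lemma chain_snd (hirr : Irreflexive G) (hacyc : Acyclic G) (b : V) :
    ∀ {a c : V}, Relation.TransGen G a c → cmpl (tcl G) a b → cmpl (tcl G) c b →
      Relation.TransGen (Forces (cmpl G)) (a, b) (c, b) := by
  intro a c htcl
  induction htcl using Relation.TransGen.head_induction_on with
  | single h =>
    intro hab hcb
    refine Relation.TransGen.single ⟨cmpl_tcl_sub hab, cmpl_tcl_sub hcb, Or.inr ⟨rfl, ?_, ?_⟩⟩
    · rintro rfl; exact hirr _ h
    · exact not_cmpl_of_rel h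
  | head h htail ih =>
    rename_i a x
    intro hab hcb
    have hxb : cmpl (tcl G) x b := by
      refine ⟨?_, ?_⟩
      · rintro rfl; exact hab.2 (Or.inl (Relation.TransGen.single h))
      · rintro (hx | hx)
        · exact hab.2 (Or.inl (Relation.TransGen.head h hx))
        · exact hcb.2 (Or.inr (hx.trans htail))
    refine Relation.TransGen.head (b := (x, b)) ⟨cmpl_tcl_sub hab, cmpl_tcl_sub hxb, Or.inr ⟨rfl, ?_, ?_⟩⟩ (ih hxb hcb)
    · rintro rfl; exact hirr _ h
    · exact not_cmpl_of_rel h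

lemma single_step (hirr : Irreflexive G) (hacyc : Acyclic G)
    {e f : V × V} (h : Forces (cmpl (tcl G)) e f) :
    Relation.TransGen (Forces (cmpl G)) e f := by
  obtain ⟨a, b⟩ := e
  obtain ⟨c, d⟩ := f
  obtain ⟨h1, h2, h3 | h3⟩ := h
  · obtain ⟨rfl, hne, hnc⟩ := h3
    have hbd : Relation.TransGen G b d ∨ Relation.TransGen G d b := by
      by_contra hx
      push_neg at hx
      exact hnc ⟨hne, fun hu => hu.elim hx.1 hx.2⟩
    rcases hbd with hbd | hdb
    · exact chain_fst hirr hacyc a hbd h1 h2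
    · exact transGen_symm (fun _ _ => forces_symm cmpl_rel_symm)
        (chain_fst hirr hacyc a hdb h2 h1)
  · obtain ⟨rfl, hne, hnc⟩ := h3
    have hac : Relation.TransGen G a c ∨ Relation.TransGen G c a := by
      by_contra hx
      push_neg at hx
      exact hnc ⟨hne, fun hu => hu.elim hx.1 hx.2⟩
    rcases hac with hac | hca
    · exact chain_snd hirr hacyc b hac h1 h2
    · exact transGen_symm (fun _ _ => forces_symm cmpl_rel_symm)
        (chain_snd hirr hacyc b hca h2 h1)

end Aux

theorem forcing_transfers_to_complement
    {V : Type*} [Fintype V] (G : V → V → Prop)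
    (hirr : Irreflexive G) (hacyc : Acyclic G)
    (a b c d : V)
    (hab : cmpl (tcl G) a b) (hcd : cmpl (tcl G) c d)
    (h : Relation.TransGen (Forces (cmpl (tcl G))) (a, b) (c, d)) :
    Relation.TransGen (Forces (cmpl G)) (a, b) (c, d) := by
  have key : ∀ e f : V × V, Relation.TransGen (Forces (cmpl (tcl G))) e f →
      Relation.TransGen (Forces (cmpl G)) e f := by
    intro e f hef
    induction hef with
    | single h => exact single_step hirr hacyc h
    | tail _ h ih => exact ih.trans (single_step hirr hacyc h)
  exact key _ _ h
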